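/- Let Γ ⊆ ℝ^d be a closed set, let r̄ > 0, let η : Γ → ℝ be continuous with 0 < η(p) ≤ r̄ for all p ∈ Γ, and let g : Γ → [0,∞) be upper semicontinuous. Define G : ℝ^d → ℝ by G(x) := sup{ g(p) : p ∈ Γ, |x − p| ≤ η(p) }, with G(x) := 0 when the indexing set is empty. Then G is everywhere finite (the supremum is attained whenever the indexing set is nonempty) and G is upper semicontinuous on ℝ^d. -/

import Mathlib

open Set Filter Topology Metric

/-- Superlevel sets of an usc function on a closed set are closed. -/
lemma aux_superlevel_closed {X : Type*} [TopologicalSpace X] {s : Set X} (hs : IsClosed s)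
    {g : X → ℝ} (hg : UpperSemicontinuousOn g s) (a : ℝ) :
    IsClosed {p | p ∈ s ∧ a ≤ g p} := by
  rw [← isOpen_compl_iff, isOpen_iff_mem_nhds]
  intro p hp
  by_cases hps : p ∈ s
  · have hlt : g p < a := by
      by_contra h
      exact hp ⟨hps, not_lt.1 h⟩
    have h1 := hg p hps a hlt
    rw [eventually_nhdsWithin_iff] at h1
    filter_upwards [h1] with q hq hq'
    exact absurd hq'.2 (not_le.2 (hq hq'.1))
  · have : sᶜ ∈ nhds p := hs.isOpen_compl.mem_nhds hps
    filter_upwards [this] with q hq hq'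
    exact hq hq'.1

/-- A function with closed superlevel sets on a compact set is bounded above there and
attains its supremum. -/
lemma aux_usc_max {X : Type*} [TopologicalSpace X] {K : Set X} (hK : IsCompact K)
    {g : X → ℝ} (hcl : ∀ a : ℝ, IsClosed {p | p ∈ K ∧ a ≤ g p}) :
    BddAbove (g '' K) ∧ (K.Nonempty → ∃ p ∈ K, g p = sSup (g '' K)) := by
  have hcpt : ∀ a : ℝ, IsCompact {p | p ∈ K ∧ a ≤ g p} :=
    fun a => hK.of_isClosed_subset (hcl a) fun p hp => hp.1
  have hbdd : BddAbove (g '' K) := by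
    by_contra hb
    rw [not_bddAbove_iff] at hb
    have hne : ∀ a : ℝ, {p | p ∈ K ∧ a ≤ g p}.Nonempty := by
      intro a
      obtain ⟨y, ⟨p, hpK, rfl⟩, hy⟩ := hb a
      exact ⟨p, hpK, hy.le⟩
    have hdir : Directed (· ⊇ ·) (fun a : ℝ => {p | p ∈ K ∧ a ≤ g p}) := by
      intro a b
      exact ⟨max a b, fun p hp => ⟨hp.1, (le_max_left a b).trans hp.2⟩,
        fun p hp => ⟨hp.1, (le_max_right a b).trans hp.2⟩⟩
    obtain ⟨p, hp⟩ := IsCompact.nonempty_iInter_of_directed_nonempty_isCompact_isClosed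
      (fun a : ℝ => {p | p ∈ K ∧ a ≤ g p}) hdir hne (fun a => hcpt a) (fun a => hcl a)
    simp only [mem_iInter] at hp
    exact absurd (hp (g p + 1)).2 (by linarith)
  refine ⟨hbdd, fun hKne => ?_⟩
  set S := sSup (g '' K) with hS
  have htn : ∀ n : ℕ, {p | p ∈ K ∧ S - 1 / (n + 1) ≤ g p}.Nonempty := by
    intro n
    have hpos : (0 : ℝ) < 1 / (n + 1) := by positivity
    have hlt : S - 1 / (n + 1) < S := by linarith
    obtain ⟨y, ⟨p, hpK, rfl⟩, hy⟩ := exists_lt_of_lt_csSup (hKne.image g) hlt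
    exact ⟨p, hpK, hy.le⟩
  have htd : ∀ n : ℕ, {p | p ∈ K ∧ S - 1 / (n + 1 + 1) ≤ g p} ⊆
      {p | p ∈ K ∧ S - 1 / (n + 1) ≤ g p} := by
    intro n p hp
    refine ⟨hp.1, le_trans ?_ hp.2⟩
    have h1 : (1 : ℝ) / (n + 1 + 1) ≤ 1 / (n + 1) :=
      one_div_le_one_div_of_le (by positivity) (by linarith)
    linarith
  obtain ⟨p, hp⟩ := IsCompact.nonempty_iInter_of_sequence_nonempty_isCompact_isClosed
    (fun n : ℕ => {p | p ∈ K ∧ S - 1 / (n + 1) ≤ g p})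
    (fun n => by exact_mod_cast htd n) htn (hcpt _) (fun n => hcl _)
  simp only [mem_iInter] at hp
  have hpK : p ∈ K := (hp 0).1
  have hSle : S ≤ g p := by
    have hlim : Tendsto (fun n : ℕ => S - 1 / (n + 1)) atTop (nhds S) := by
      have : Tendsto (fun n : ℕ => 1 / ((n : ℝ) + 1)) atTop (nhds 0) := tendsto_one_div_add_atTop_nhds_zero_nat
      simpa using tendsto_const_nhds.sub this
    exact le_of_tendsto' hlim fun n => (hp n).2
  exact ⟨p, hpK, le_antisymm (le_csSup hbdd (mem_image_of_mem g hpK)) hSle⟩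

/-- **Upper semicontinuity of the extended supremum** (Lemma 4.9 of the paper).  Let
`Γ ⊆ ℝ^d` be closed, `η : Γ → (0, r̄]` continuous, and `g : Γ → [0,∞)` upper semicontinuous
(on `Γ`).  Define `G(x) := sup {g(p) : p ∈ Γ, |x−p| ≤ η(p)}` with `sup ∅ = 0`.  Then the
supremum is attained whenever the indexing set is nonempty, and `G` is upper semicontinuous
on `ℝ^d`. -/
theorem stmt15 (d : ℕ) (Γ : Set (EuclideanSpace ℝ (Fin d))) (hΓ : IsClosed Γ)
    (rbar : ℝ) (hrbar : 0 < rbar)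
    (η : EuclideanSpace ℝ (Fin d) → ℝ)
    (hηc : ContinuousOn η Γ)
    (hηpos : ∀ p ∈ Γ, 0 < η p) (hηle : ∀ p ∈ Γ, η p ≤ rbar)
    (g : EuclideanSpace ℝ (Fin d) → ℝ)
    (hg0 : ∀ p ∈ Γ, 0 ≤ g p)
    (hgu : UpperSemicontinuousOn g Γ)
    (G : EuclideanSpace ℝ (Fin d) → ℝ)
    (hG : ∀ x, G x = sSup (g '' {p | p ∈ Γ ∧ dist x p ≤ η p})) :
    (∀ x : EuclideanSpace ℝ (Fin d), {p | p ∈ Γ ∧ dist x p ≤ η p}.Nonempty →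
      ∃ p, (p ∈ Γ ∧ dist x p ≤ η p) ∧ g p = G x) ∧
    UpperSemicontinuous G := by
  -- each K x is closed
  have hKcl : ∀ x, IsClosed {p | p ∈ Γ ∧ dist x p ≤ η p} := by
    intro x
    have husc : UpperSemicontinuousOn (fun p => η p - dist x p) Γ :=
      ((hηc.sub ((continuous_dist.comp (Continuous.prodMk_right x) ).continuousOn : ContinuousOn (fun p => dist x p) Γ))).upperSemicontinuousOn
    have := aux_superlevel_closed hΓ husc 0
    convert this using 1
    ext p
    simp [sub_nonneg]
  -- each K x is compact
  have hKcpt : ∀ x, IsCompact {p | p ∈ Γ ∧ dist x p ≤ η p} := by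
    intro x
    refine (isCompact_closedBall x rbar).of_isClosed_subset (hKcl x) ?_
    intro p hp
    rw [mem_closedBall, dist_comm]
    exact hp.2.trans (hηle p hp.1)
  -- superlevel sets of g on K x are closed
  have hscl : ∀ x (a : ℝ), IsClosed {p | p ∈ {p | p ∈ Γ ∧ dist x p ≤ η p} ∧ a ≤ g p} := by
    intro x a
    have : {p | p ∈ {p | p ∈ Γ ∧ dist x p ≤ η p} ∧ a ≤ g p} = {p | p ∈ Γ ∧ dist x p ≤ η p} ∩ {p | p ∈ Γ ∧ a ≤ g p} := by
      ext p
      exact ⟨fun h => ⟨h.1, h.1.1, h.2⟩, fun h => ⟨h.1, h.2.2⟩⟩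
    rw [this]
    exact (hKcl x).inter (aux_superlevel_closed hΓ hgu a)
  have hmax := fun x => aux_usc_max (hKcpt x) (hscl x)
  have hG0 : ∀ x, 0 ≤ G x := by
    intro x
    rw [hG x]
    rcases eq_empty_or_nonempty {p | p ∈ Γ ∧ dist x p ≤ η p} with h | h
    · rw [h]; simp [Real.sSup_empty]
    · obtain ⟨p, hpK, hps⟩ := (hmax x).2 h
      rw [← hps]
      exact hg0 p hpK.1
  constructor
  · intro x hne
    obtain ⟨p, hpK, hps⟩ := (hmax x).2 hne
    exact ⟨p, hpK, by rw [hps, hG x]⟩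
  · rw [upperSemicontinuous_iff_isClosed_preimage]
    intro y
    apply IsSeqClosed.isClosed
    intro x xlim hx hlim
    by_cases hy : y ≤ 0
    · exact hy.trans (hG0 xlim)
    push_neg at hy
    have hne : ∀ n, {p | p ∈ Γ ∧ dist (x n) p ≤ η p}.Nonempty := by
      intro n
      by_contra h
      rw [not_nonempty_iff_eq_empty] at h
      have h2 : y ≤ G (x n) := hx n
      rw [hG (x n), h] at h2
      simp [Real.sSup_empty] at h2
      linarith
    choose p hpK hps using fun n => (hmax (x n)).2 (hne n)
    have hgy : ∀ n, y ≤ g (p n) := by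
      intro n
      rw [hps n, ← hG (x n)]
      exact hx n
    obtain ⟨C, hC⟩ := (hlim.dist (tendsto_const_nhds : Tendsto (fun _ : ℕ => xlim) atTop (nhds xlim))).bddAbove_range
    have hball : ∀ n, p n ∈ closedBall xlim (rbar + C) := by
      intro n
      rw [mem_closedBall]
      have h1 : dist (p n) (x n) ≤ rbar := by
        rw [dist_comm]
        exact (hpK n).2.trans (hηle _ (hpK n).1)
      have h2 : dist (x n) xlim ≤ C := hC (mem_range_self n)
      calc dist (p n) xlim ≤ dist (p n) (x n) + dist (x n) xlim := dist_triangle _ _ _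
        _ ≤ rbar + C := add_le_add h1 h2
    obtain ⟨q, hq, φ, hφ, hφt⟩ := (isCompact_closedBall xlim (rbar + C)).tendsto_subseq hball
    have hqΓ : q ∈ Γ := hΓ.mem_of_tendsto hφt (Eventually.of_forall fun n => (hpK (φ n)).1)
    have htin : Tendsto (fun n => p (φ n)) atTop (nhdsWithin q Γ) :=
      tendsto_nhdsWithin_of_tendsto_nhds_of_eventually_within _ hφt
        (Eventually.of_forall fun n => (hpK (φ n)).1)
    have hqK : dist xlim q ≤ η q := by
      have hd : Tendsto (fun n => dist (x (φ n)) (p (φ n))) atTop (nhds (dist xlim q)) :=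
        (hlim.comp hφ.tendsto_atTop).dist hφt
      have hη : Tendsto (fun n => η (p (φ n))) atTop (nhds (η q)) :=
        (hηc q hqΓ).tendsto.comp htin
      exact le_of_tendsto_of_tendsto' hd hη fun n => (hpK (φ n)).2
    have hyq : y ≤ g q := by
      by_contra h
      push_neg at h
      obtain ⟨n, hn⟩ := (htin.eventually (hgu q hqΓ y h)).exists
      exact absurd (hgy (φ n)) (not_le.2 hn)
    rw [mem_preimage, mem_Ici, hG xlim]
    exact hyq.trans (le_csSup (hmax xlim).1 (mem_image_of_mem g ⟨hqΓ, hqK⟩))
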